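/- Let p be a prime and M ≥ 1 an integer, let (λ,θ) ∈ A, and let (λ̃,θ̃) = S₂(λ,θ). If θ̃_i = θ̃_{i+1} for some 1 ≤ i ≤ M, then λ̃_i + θ̃_i ≡ 0 (mod p). -/

import Mathlib

open Function

/-- The state of the Serganova algorithm: a pair `(λ, θ) ∈ ℤ^M × ℤ^{M+1}`.
Indices are 0-based, so the paper's `λ_i` (for `1 ≤ i ≤ M`) is `s.1 ⟨i-1,_⟩`
and the paper's `θ_j` (for `1 ≤ j ≤ M+1`) is `s.2 ⟨j-1,_⟩`. -/
abbrev SState (M : ℕ) := (Fin M → ℤ) × (Fin (M + 1) → ℤ)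

/-- One step of the Serganova algorithm, processing the (0-based) pair `(i, j)`:
if `λ_i + θ_j ≡ 0 (mod p)` nothing changes, otherwise `λ_i` is decreased by `1`
and `θ_j` is increased by `1`. -/
def sStep (p M : ℕ) (ij : Fin M × Fin (M + 1)) (s : SState M) : SState M :=
  if (p : ℤ) ∣ s.1 ij.1 + s.2 ij.2 then s
  else (Function.update s.1 ij.1 (s.1 ij.1 - 1),
        Function.update s.2 ij.2 (s.2 ij.2 + 1))

/-- One step of the inverse algorithm, processing the (0-based) pair `(i, j)`:
if `λ_i + θ_j ≡ 0 (mod p)` nothing changes, otherwise `λ_i` is increased by `1`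
and `θ_j` is decreased by `1`. -/
def tStep (p M : ℕ) (ij : Fin M × Fin (M + 1)) (s : SState M) : SState M :=
  if (p : ℤ) ∣ s.1 ij.1 + s.2 ij.2 then s
  else (Function.update s.1 ij.1 (s.1 ij.1 + 1),
        Function.update s.2 ij.2 (s.2 ij.2 - 1))

/-- Run the Serganova algorithm along a list of pairs. -/
def sRun (p M : ℕ) (l : List (Fin M × Fin (M + 1))) (s : SState M) : SState M :=
  l.foldl (fun s ij => sStep p M ij s) s

/-- Run the inverse algorithm along a list of pairs. -/
def tRun (p M : ℕ) (l : List (Fin M × Fin (M + 1))) (s : SState M) : SState M :=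
  l.foldl (fun s ij => tStep p M ij s) s

/-- The Version 1 order on the pair set `P = {(i,j) : 0 ≤ j ≤ i ≤ M-1}` (0-based):
`j` increasing, and for fixed `j`, `i` decreasing from `M-1` down to `j`.
This is the paper's order `(M,1),(M-1,1),…,(1,1),(M,2),…,(2,2),…,(M,M)`. -/
def order1 (M : ℕ) : List (Fin M × Fin (M + 1)) :=
  (List.finRange M).flatMap fun j =>
    ((List.finRange M).reverse.filter fun i => j ≤ i).map fun i => (i, j.castSucc)

/-- The Version 2 order on the pair set `P` (0-based):
`i` decreasing from `M-1` down to `0`, and for fixed `i`, `j` increasing from `0` to `i`.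
This is the paper's order `(M,1),(M,2),…,(M,M),(M-1,1),…,(M-1,M-1),…,(1,1)`. -/
def order2 (M : ℕ) : List (Fin M × Fin (M + 1)) :=
  (List.finRange M).reverse.flatMap fun i =>
    ((List.finRange M).filter fun j => j ≤ i).map fun j => (i, j.castSucc)

/-- The Serganova map `S₁` (Version 1 order). -/
def S1 (p M : ℕ) (s : SState M) : SState M := sRun p M (order1 M) s

/-- The Serganova map `S₂` (Version 2 order). -/
def S2 (p M : ℕ) (s : SState M) : SState M := sRun p M (order2 M) s

/-- The inverse algorithm `T₁`: inverse steps, pairs processed in reverse Version 1 order. -/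
def T1 (p M : ℕ) (s : SState M) : SState M := tRun p M (order1 M).reverse s

/-- The inverse algorithm `T₂`: inverse steps, pairs processed in reverse Version 2 order. -/
def T2 (p M : ℕ) (s : SState M) : SState M := tRun p M (order2 M).reverse s

/-- The set `A` of dominant pairs: `λ_1 ≥ … ≥ λ_M` and `θ_1 ≥ … ≥ θ_{M+1}`. -/
def domA (M : ℕ) : Set (SState M) := {s | Antitone s.1 ∧ Antitone s.2}

/-- The set `𝕄`: dominant pairs such that (in 1-based terms) for `2 ≤ i ≤ M`,
`λ_{i-1} = λ_i → p ∣ λ_i + θ_i`, and for `1 ≤ i ≤ M`, `θ_i = θ_{i+1} → p ∣ λ_i + θ_i`. -/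
def setM (p M : ℕ) : Set (SState M) :=
  {s | Antitone s.1 ∧ Antitone s.2 ∧
    (∀ (i : ℕ) (hi : i + 1 < M),
      s.1 ⟨i, by omega⟩ = s.1 ⟨i + 1, hi⟩ →
        (p : ℤ) ∣ s.1 ⟨i + 1, hi⟩ + s.2 ⟨i + 1, by omega⟩) ∧
    (∀ (i : ℕ) (hi : i < M),
      s.2 ⟨i, by omega⟩ = s.2 ⟨i + 1, by omega⟩ →
        (p : ℤ) ∣ s.1 ⟨i, hi⟩ + s.2 ⟨i, by omega⟩)}


namespace SerganovaAux

/-- The row of `order2` for row index `i`. -/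
def rowList (M : ℕ) (i : Fin M) : List (Fin M × Fin (M + 1)) :=
  ((List.finRange M).filter fun j => j ≤ i).map fun j => (i, j.castSucc)

lemma order2_eq (M : ℕ) : order2 M = (List.finRange M).reverse.flatMap (rowList M) := rfl

/-- The full (unfiltered) row. -/
def fullRow (M : ℕ) (i : Fin M) : List (Fin M × Fin (M + 1)) :=
  (List.finRange M).map fun j => (i, j.castSucc)

lemma filter_range_le (n k : ℕ) (h : k < n) :
    (List.range n).filter (fun v => decide (v ≤ k)) = List.range (k + 1) := by
  induction n with
  | zero => omega
  | succ n ih =>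
    rw [List.range_succ, List.filter_append]
    rcases Nat.lt_or_ge k n with h' | h'
    · rw [ih h']
      have : List.filter (fun v => decide (v ≤ k)) [n] = [] := by
        simp only [List.filter_cons, List.filter_nil]
        simp [Nat.not_le.mpr h']
      rw [this, List.append_nil]
    · have hk : k = n := by omega
      subst hk
      have h1 : List.filter (fun v => decide (v ≤ k)) (List.range k) = List.range k := by
        apply List.filter_eq_self.mpr
        intro a ha
        simp only [decide_eq_true_eq]
        exact Nat.le_of_lt (List.mem_range.mp ha)
      have h2 : List.filter (fun v => decide (v ≤ k)) [k] = [k] := by simp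
      rw [h1, h2, ← List.range_succ]

lemma filter_le_eq_take (M : ℕ) (i : Fin M) :
    ((List.finRange M).filter fun j => j ≤ i) = (List.finRange M).take (i.val + 1) := by
  apply List.map_injective_iff.mpr Fin.val_injective
  have h1 : (fun j : Fin M => decide (j ≤ i)) = (fun v => decide (v ≤ i.val)) ∘ Fin.val := by
    funext j
    show decide (j ≤ i) = decide (j.val ≤ i.val)
    exact decide_eq_decide.mpr Fin.le_def
  have h2 : (List.finRange M).map Fin.val = List.range M := List.map_coe_finRange_eq_range (n := M)
  rw [h1, ← List.filter_map, List.map_take, h2, List.take_range, filter_range_le M i.val i.isLt]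
  congr 1
  omega

lemma rowList_eq_take (M : ℕ) (i : Fin M) :
    rowList M i = (fullRow M i).take (i.val + 1) := by
  unfold rowList fullRow
  rw [filter_le_eq_take, List.map_take]

lemma take_succ_fullRow (M : ℕ) (i : Fin M) (k : ℕ) (hk : k < M) :
    (fullRow M i).take (k + 1) =
      (fullRow M i).take k ++ [(i, (⟨k, hk⟩ : Fin M).castSucc)] := by
  rw [List.take_succ]
  congr 1
  have hlen : k < (fullRow M i).length := by
    unfold fullRow
    rw [List.length_map, List.length_finRange]
    exact hk
  rw [List.getElem?_eq_getElem hlen]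
  have hget : (fullRow M i)[k] = (i, (⟨k, hk⟩ : Fin M).castSucc) := by
    simp only [fullRow, List.getElem_map, List.getElem_finRange]
    simp only [Prod.mk.injEq]
    exact ⟨trivial, Fin.ext rfl⟩
  rw [hget]
  rfl

lemma sRun_append (p M : ℕ) (l1 l2 : List (Fin M × Fin (M + 1))) (s : SState M) :
    sRun p M (l1 ++ l2) s = sRun p M l2 (sRun p M l1 s) :=
  List.foldl_append

lemma sRun_singleton (p M : ℕ) (x : Fin M × Fin (M + 1)) (s : SState M) :
    sRun p M [x] s = sStep p M x s := rfl

lemma sStep_fst_ne (p M : ℕ) (ij : Fin M × Fin (M + 1)) (s : SState M) (a : Fin M)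
    (h : a ≠ ij.1) : (sStep p M ij s).1 a = s.1 a := by
  unfold sStep
  split_ifs with hd
  · rfl
  · exact Function.update_of_ne h _ _

lemma sStep_snd_ne (p M : ℕ) (ij : Fin M × Fin (M + 1)) (s : SState M) (j : Fin (M + 1))
    (h : j ≠ ij.2) : (sStep p M ij s).2 j = s.2 j := by
  unfold sStep
  split_ifs with hd
  · rfl
  · exact Function.update_of_ne h _ _

lemma sRun_fst_eq (p M : ℕ) (l : List (Fin M × Fin (M + 1))) (a : Fin M) :
    ∀ s : SState M, (∀ ij ∈ l, a ≠ ij.1) → (sRun p M l s).1 a = s.1 a := by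
  induction l with
  | nil => intro s _; rfl
  | cons x xs ih =>
    intro s h
    have : sRun p M (x :: xs) s = sRun p M xs (sStep p M x s) := rfl
    rw [this, ih _ (fun ij hij => h ij (List.mem_cons_of_mem _ hij)),
      sStep_fst_ne p M x s a (h x (List.mem_cons_self))]

lemma sRun_snd_eq (p M : ℕ) (l : List (Fin M × Fin (M + 1))) (j : Fin (M + 1)) :
    ∀ s : SState M, (∀ ij ∈ l, j ≠ ij.2) → (sRun p M l s).2 j = s.2 j := by
  induction l with
  | nil => intro s _; rfl
  | cons x xs ih =>
    intro s h
    have : sRun p M (x :: xs) s = sRun p M xs (sStep p M x s) := rfl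
    rw [this, ih _ (fun ij hij => h ij (List.mem_cons_of_mem _ hij)),
      sStep_snd_ne p M x s j (h x (List.mem_cons_self))]

/-- The key invariant along one row of the algorithm. -/
lemma row_invariant (p M : ℕ) (i : Fin M) (s : SState M) (hs : Antitone s.2) :
    ∀ (k : ℕ) (hkM : k < M), k ≤ i.val →
    Antitone (sRun p M ((fullRow M i).take (k + 1)) s).2 ∧
    (∀ j : Fin (M + 1), k < j.val → (sRun p M ((fullRow M i).take (k + 1)) s).2 j = s.2 j) ∧
    (∀ a : Fin M, a ≠ i → (sRun p M ((fullRow M i).take (k + 1)) s).1 a = s.1 a) ∧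
    ((sRun p M ((fullRow M i).take (k + 1)) s).2 ⟨k, Nat.lt_succ_of_lt hkM⟩ =
        (sRun p M ((fullRow M i).take (k + 1)) s).2 ⟨k + 1, Nat.succ_lt_succ hkM⟩ →
      (p : ℤ) ∣ (sRun p M ((fullRow M i).take (k + 1)) s).1 i +
        (sRun p M ((fullRow M i).take (k + 1)) s).2 ⟨k, Nat.lt_succ_of_lt hkM⟩) := by
  intro k
  induction k with
  | zero =>
    intro hkM _
    rw [take_succ_fullRow M i 0 hkM, List.take_zero, List.nil_append, sRun_singleton]
    set c0 : Fin (M + 1) := (⟨0, hkM⟩ : Fin M).castSucc with hc0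
    have hc0v : c0.val = 0 := rfl
    unfold sStep
    split_ifs with hd
    · exact ⟨hs, fun _ _ => rfl, fun _ _ => rfl, fun _ => hd⟩
    · dsimp only
      refine ⟨?_, ?_, ?_, ?_⟩
      · intro a b hab
        by_cases hb : b = c0
        · have ha : a = c0 := by
            apply Fin.ext
            have := hab
            rw [hb] at this
            have : a.val ≤ 0 := this
            omega
          rw [ha, hb]
        · rw [Function.update_of_ne hb]
          by_cases ha : a = c0
          · rw [ha, Function.update_self]
            have : s.2 b ≤ s.2 c0 := hs (by rw [ha] at hab; exact hab)
            omega
          · rw [Function.update_of_ne ha]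
            exact hs hab
      · intro j hj
        apply Function.update_of_ne
        intro hje
        rw [hje] at hj
        omega
      · intro a ha
        exact Function.update_of_ne ha _ _
      · intro heq
        exfalso
        have e1 : Function.update s.2 c0 (s.2 c0 + 1) ⟨0, Nat.lt_succ_of_lt hkM⟩
            = s.2 c0 + 1 := Function.update_self _ _ _
        have hne : (⟨0 + 1, Nat.succ_lt_succ hkM⟩ : Fin (M + 1)) ≠ c0 := by
          intro hc
          have : (1 : ℕ) = 0 := congrArg Fin.val hc
          omega
        have e2 : Function.update s.2 c0 (s.2 c0 + 1) ⟨0 + 1, Nat.succ_lt_succ hkM⟩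
            = s.2 ⟨0 + 1, Nat.succ_lt_succ hkM⟩ := Function.update_of_ne hne _ _
        rw [e1, e2] at heq
        have : s.2 ⟨0 + 1, Nat.succ_lt_succ hkM⟩ ≤ s.2 c0 := by
          apply hs
          show c0.val ≤ 0 + 1
          omega
        omega
  | succ k ih =>
    intro hkM hki
    have hkM' : k < M := by omega
    have hki' : k ≤ i.val := by omega
    obtain ⟨IH1, IH2, IH3, IH4⟩ := ih hkM' hki'
    set s' := sRun p M ((fullRow M i).take (k + 1)) s with hs'
    rw [take_succ_fullRow M i (k + 1) hkM, sRun_append, sRun_singleton, ← hs']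
    set ck1 : Fin (M + 1) := (⟨k + 1, hkM⟩ : Fin M).castSucc with hck1
    have hck1v : ck1.val = k + 1 := rfl
    have hmk1 : (⟨k + 1, Nat.lt_succ_of_lt hkM⟩ : Fin (M + 1)) = ck1 := by
      apply Fin.ext; exact rfl
    have hckk : (⟨k, Nat.lt_succ_of_lt hkM'⟩ : Fin (M + 1)) ≤ ck1 := by
      show k ≤ k + 1; omega
    unfold sStep
    split_ifs with hd
    · refine ⟨IH1, fun j hj => IH2 j (by omega), IH3, ?_⟩
      intro _
      rw [hmk1]
      exact hd
    · dsimp only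
      -- strict inequality at the previous column
      have hstrict : s'.2 ck1 < s'.2 ⟨k, Nat.lt_succ_of_lt hkM'⟩ := by
        have hge : s'.2 ck1 ≤ s'.2 ⟨k, Nat.lt_succ_of_lt hkM'⟩ := IH1 hckk
        rcases lt_or_eq_of_le hge with h' | h'
        · exact h'
        · exfalso
          apply hd
          have heqk : s'.2 ⟨k, Nat.lt_succ_of_lt hkM'⟩ = s'.2 ⟨k + 1, Nat.succ_lt_succ hkM'⟩ :=
            h'.symm.trans (congrArg s'.2 (Fin.ext rfl))
          have hdvd := IH4 heqk
          rw [← h'] at hdvd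
          exact hdvd
      refine ⟨?_, ?_, ?_, ?_⟩
      · intro a b hab
        by_cases hb : b = ck1
        · by_cases ha : a = ck1
          · rw [ha, hb]
          · rw [hb, Function.update_self, Function.update_of_ne ha]
            have hak : a ≤ (⟨k, Nat.lt_succ_of_lt hkM'⟩ : Fin (M + 1)) := by
              have h1 : a.val ≤ k + 1 := by rw [hb] at hab; exact hab
              have h2 : a.val ≠ k + 1 := fun hc => ha (Fin.ext hc)
              show a.val ≤ k
              omega
            have : s'.2 ⟨k, Nat.lt_succ_of_lt hkM'⟩ ≤ s'.2 a := IH1 hak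
            omega
        · rw [Function.update_of_ne hb]
          by_cases ha : a = ck1
          · rw [ha, Function.update_self]
            have : s'.2 b ≤ s'.2 ck1 := IH1 (by rw [ha] at hab; exact hab)
            omega
          · rw [Function.update_of_ne ha]
            exact IH1 hab
      · intro j hj
        have hne : j ≠ ck1 := by
          intro hc
          rw [hc] at hj
          have : ck1.val = k + 1 := rfl
          omega
        rw [Function.update_of_ne hne]
        exact IH2 j (by omega)
      · intro a ha
        rw [Function.update_of_ne ha]
        exact IH3 a ha
      · intro heq
        exfalso
        rw [hmk1, Function.update_self] at heq
        have hne2 : (⟨k + 1 + 1, Nat.succ_lt_succ hkM⟩ : Fin (M + 1)) ≠ ck1 := by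
          intro hc
          have : k + 1 + 1 = k + 1 := congrArg Fin.val hc
          omega
        rw [Function.update_of_ne hne2] at heq
        have hle : s'.2 ⟨k + 1 + 1, Nat.succ_lt_succ hkM⟩ ≤ s'.2 ck1 := by
          apply IH1
          show ck1.val ≤ k + 1 + 1
          omega
        omega

lemma rows_antitone (p M : ℕ) (rows : List (Fin M)) :
    ∀ s : SState M, Antitone s.2 →
      Antitone (sRun p M (rows.flatMap (rowList M)) s).2 := by
  induction rows with
  | nil => intro s hs; exact hs
  | cons r rs ih =>
    intro s hs
    rw [List.flatMap_cons, sRun_append]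
    apply ih
    rw [rowList_eq_take]
    exact (row_invariant p M r s hs r.val r.isLt le_rfl).1

lemma mem_rowList (M : ℕ) {ij : Fin M × Fin (M + 1)} {r : Fin M}
    (h : ij ∈ rowList M r) : ij.1 = r ∧ ij.2.val ≤ r.val := by
  unfold rowList at h
  rw [List.mem_map] at h
  obtain ⟨j, hj, rfl⟩ := h
  rw [List.mem_filter] at hj
  refine ⟨rfl, ?_⟩
  have : j ≤ r := by simpa using hj.2
  simpa using this

lemma mem_take_finRange {M : ℕ} {r : Fin M} {n : ℕ} (hn : n ≤ M)
    (h : r ∈ (List.finRange M).take n) : r.val < n := by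
  have h1 : r.val ∈ ((List.finRange M).take n).map Fin.val := List.mem_map_of_mem h
  rw [List.map_take] at h1
  have h2 : (List.finRange M).map Fin.val = List.range M := List.map_coe_finRange_eq_range (n := M)
  rw [h2, List.take_range] at h1
  have := List.mem_range.mp h1
  omega

end SerganovaAux

open SerganovaAux in
/-- If `(λ̃,θ̃) = S₂(λ,θ)` for a dominant pair `(λ,θ)` and
`θ̃_i = θ̃_{i+1}` (1-based, `1 ≤ i ≤ M`), then `p ∣ λ̃_i + θ̃_i`. -/
theorem serganova_v2_theta_congruence (p M : ℕ) (hp : p.Prime) (hM : 1 ≤ M)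
    (s : SState M) (hs : s ∈ domA M) (i : Fin M)
    (h : (S2 p M s).2 i.castSucc = (S2 p M s).2 i.succ) :
    (p : ℤ) ∣ (S2 p M s).1 i + (S2 p M s).2 i.castSucc := by
  classical
  obtain ⟨hsl, hst⟩ := hs
  -- Split the order-2 list into the rows above `i`, the row `i`, and the rows below `i`.
  have hlen : i.val < (List.finRange M).length := by
    rw [List.length_finRange]; exact i.isLt
  have hget : (List.finRange M)[i.val] = i := by
    rw [List.getElem_finRange]; apply Fin.ext; simp
  have hsplit : (List.finRange M).reverse =
      ((List.finRange M).drop (i.val + 1)).reverse ++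
        i :: ((List.finRange M).take i.val).reverse := by
    conv_lhs => rw [← List.take_append_drop i.val (List.finRange M),
      List.drop_eq_getElem_cons hlen, hget]
    rw [List.reverse_append, List.reverse_cons, List.append_assoc, List.singleton_append]
  have horder : order2 M =
      (((List.finRange M).drop (i.val + 1)).reverse.flatMap (rowList M)) ++
        (rowList M i ++ (((List.finRange M).take i.val).reverse.flatMap (rowList M))) := by
    rw [order2_eq, hsplit, List.flatMap_append, List.flatMap_cons]
  set s1 := sRun p M (((List.finRange M).drop (i.val + 1)).reverse.flatMap (rowList M)) s
    with hs1def
  have hanti1 : Antitone s1.2 := rows_antitone p M _ s hst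
  set s2 := sRun p M (rowList M i) s1 with hs2def
  have hrow := row_invariant p M i s1 hanti1 i.val i.isLt le_rfl
  rw [← rowList_eq_take] at hrow
  obtain ⟨A1, A2, A3, A4⟩ := hrow
  -- the rows below `i` do not touch the relevant entries
  have hmem : ∀ ij ∈ (((List.finRange M).take i.val).reverse.flatMap (rowList M)),
      ij.1.val < i.val ∧ ij.2.val < i.val := by
    intro ij hij
    rw [List.mem_flatMap] at hij
    obtain ⟨r, hr, hijr⟩ := hij
    rw [List.mem_reverse] at hr
    have hrv : r.val < i.val := mem_take_finRange (le_of_lt i.isLt) hr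
    obtain ⟨h1, h2⟩ := mem_rowList M hijr
    constructor
    · rw [h1]; exact hrv
    · omega
  have hS2 : S2 p M s = sRun p M (((List.finRange M).take i.val).reverse.flatMap (rowList M))
      s2 := by
    rw [S2, horder, sRun_append, sRun_append]
  have e1 : (S2 p M s).1 i = s2.1 i := by
    rw [hS2]
    apply sRun_fst_eq
    intro ij hij hc
    have hv := (hmem ij hij).1
    rw [← hc] at hv
    omega
  have e2 : (S2 p M s).2 i.castSucc = s2.2 i.castSucc := by
    rw [hS2]
    apply sRun_snd_eq
    intro ij hij hc
    have hv := (hmem ij hij).2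
    rw [← hc] at hv
    have : (i.castSucc : Fin (M + 1)).val = i.val := rfl
    omega
  have e3 : (S2 p M s).2 i.succ = s2.2 i.succ := by
    rw [hS2]
    apply sRun_snd_eq
    intro ij hij hc
    have hv := (hmem ij hij).2
    rw [← hc] at hv
    have : (i.succ : Fin (M + 1)).val = i.val + 1 := rfl
    omega
  rw [e2, e3] at h
  rw [e1, e2]
  have hcs : i.castSucc = (⟨i.val, Nat.lt_succ_of_lt i.isLt⟩ : Fin (M + 1)) := Fin.ext rfl
  have hsc : i.succ = (⟨i.val + 1, Nat.succ_lt_succ i.isLt⟩ : Fin (M + 1)) := Fin.ext rfl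
  rw [hcs, hsc] at h
  rw [hcs]
  exact A4 h
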